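/- If X ~ N(θ,1), then for every integer k ≥ 1, E[H_k(X)²] ≤ k^k · (1 + θ²/k)^k, where H_k is the k-th probabilists' Hermite polynomial. -/

import Mathlib

open MeasureTheory ProbabilityTheory
open Polynomial Real


noncomputable def G (x : ℝ) : ℝ := Real.exp (-x^2/2)

-- integrability of x^n * G
lemma integrable_pow_G (n : ℕ) : Integrable (fun x : ℝ => x ^ n * G x) := by
  have h := integrable_rpow_mul_exp_neg_mul_sq (b := (1:ℝ)/2) (by norm_num) (s := (n:ℝ)) (by exact_mod_cast neg_one_lt_zero.trans_le (Nat.cast_nonneg n))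
  convert h using 2 with x
  rw [Real.rpow_natCast]
  unfold G
  ring_nf

lemma integrable_poly_G (p : ℝ[X]) : Integrable (fun x : ℝ => p.eval x * G x) := by
  have : (fun x : ℝ => p.eval x * G x)
      = fun x => ∑ i ∈ Finset.range (p.natDegree + 1), p.coeff i * (x ^ i * G x) := by
    funext x
    rw [Polynomial.eval_eq_sum_range, Finset.sum_mul]
    congr 1; funext i; ring
  rw [this]
  exact integrable_finset_sum _ fun i _ => (integrable_pow_G i).const_mul _

lemma hasDerivAt_G (x : ℝ) : HasDerivAt G (-x * G x) x := by
  have h1 : HasDerivAt (fun x : ℝ => -x^2/2) (-x) x := by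
    have := ((hasDerivAt_pow 2 x).fun_neg).div_const 2
    refine this.congr_deriv ?_; push_cast; ring
  simpa [G, mul_comm] using (show HasDerivAt G _ x from h1.exp)

lemma integral_stein (p : ℝ[X]) :
    ∫ x : ℝ, (X * p - derivative p).eval x * G x = 0 := by
  have hderiv : ∀ x : ℝ, HasDerivAt (fun x => -(p.eval x) * G x)
      ((X * p - derivative p).eval x * G x) x := by
    intro x
    have h := ((p.hasDerivAt x).fun_neg).fun_mul (hasDerivAt_G x)
    refine h.congr_deriv ?_
    simp [G]
    ring
  exact integral_eq_zero_of_hasDerivAt_of_integrable hderiv (integrable_poly_G _)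
    (by simpa only [neg_mul] using ((integrable_poly_G p).fun_neg))

lemma integral_ibp (p q : ℝ[X]) :
    ∫ x : ℝ, (X * p - derivative p).eval x * q.eval x * G x
      = ∫ x : ℝ, p.eval x * (derivative q).eval x * G x := by
  have h := integral_stein (p * q)
  have hsplit : ∀ x : ℝ, (X * (p * q) - derivative (p * q)).eval x * G x
      = (X * p - derivative p).eval x * q.eval x * G x
        - p.eval x * (derivative q).eval x * G x := by
    intro x; simp [derivative_mul]; ring
  have hi1 : Integrable (fun x : ℝ => (X * p - derivative p).eval x * q.eval x * G x) := by
    have := integrable_poly_G ((X * p - derivative p) * q)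
    simpa [mul_assoc] using this
  have hi2 : Integrable (fun x : ℝ => p.eval x * (derivative q).eval x * G x) := by
    have := integrable_poly_G (p * derivative q)
    simpa [mul_assoc] using this
  have h2 : (∫ x : ℝ, (X * p - derivative p).eval x * q.eval x * G x)
      - ∫ x : ℝ, p.eval x * (derivative q).eval x * G x = 0 := by
    rw [← integral_sub hi1 hi2, ← h]
    exact integral_congr_ae (Filter.Eventually.of_forall fun x => (hsplit x).symm)
  linarith

noncomputable def Hr (n : ℕ) : ℝ[X] := (hermite n).map (Int.castRingHom ℝ)

lemma Hr_succ (n : ℕ) : Hr (n + 1) = X * Hr n - derivative (Hr n) := by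
  unfold Hr
  rw [hermite_succ, Polynomial.map_sub, Polynomial.map_mul, map_X, derivative_map]

lemma integral_Hr_mul (n : ℕ) (q : ℝ[X]) :
    ∫ x : ℝ, (Hr n).eval x * q.eval x * G x
      = ∫ x : ℝ, ((derivative^[n]) q).eval x * G x := by
  induction n generalizing q with
  | zero => simp [Hr, hermite_zero]
  | succ n ih =>
      rw [Hr_succ, integral_ibp, ih (derivative q), Function.iterate_succ_apply]

lemma Hr_zero : Hr 0 = 1 := by simp [Hr, hermite_zero]

lemma derivative_Hr : ∀ n, derivative (Hr (n + 1)) = ((n + 1 : ℕ) : ℝ[X]) * Hr n := by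
  intro n
  induction n with
  | zero => simp [Hr, hermite_one, hermite_zero]
  | succ n ih =>
      have h2 : derivative (Hr (n+1+1))
          = derivative (X * Hr (n+1)) - derivative (((n + 1 : ℕ) : ℝ[X]) * Hr n) := by
        rw [Hr_succ (n+1), derivative_sub, ih]
      rw [h2, derivative_mul, derivative_mul, derivative_X, derivative_natCast, ih, Hr_succ n]
      push_cast
      ring

lemma natDegree_Hr (n : ℕ) : (Hr n).natDegree = n := by
  unfold Hr
  rw [Polynomial.natDegree_map_eq_of_injective Int.cast_injective]
  exact natDegree_hermite

lemma coeff_Hr_self (n : ℕ) : (Hr n).coeff n = 1 := by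
  simp [Hr, coeff_hermite_self]

lemma iterate_derivative_Hr_self : ∀ n, derivative^[n] (Hr n) = C (n.factorial : ℝ) := by
  intro n
  induction n with
  | zero => simp [Hr_zero]
  | succ n ih =>
      rw [Function.iterate_succ_apply, derivative_Hr, ← C_eq_natCast,
        iterate_derivative_C_mul, ih]
      rw [← C_mul]
      congr 1
      push_cast [Nat.factorial_succ]
      ring

lemma integral_G : ∫ x : ℝ, G x = √(2 * π) := by
  have h := integral_gaussian (1/2)
  have : (fun x : ℝ => Real.exp (-(1/2) * x ^ 2)) = G := by
    funext x; unfold G; ring_nf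
  rw [this] at h
  rw [h]
  congr 1
  ring

lemma integral_Hr_mul_Hr (i j : ℕ) (hij : i ≤ j) :
    ∫ x : ℝ, (Hr j).eval x * (Hr i).eval x * G x
      = (if i = j then (i.factorial : ℝ) * √(2 * π) else 0) := by
  rw [integral_Hr_mul]
  rcases eq_or_lt_of_le hij with rfl | hlt
  · rw [iterate_derivative_Hr_self]
    simp [integral_G, integral_const_mul, if_pos rfl]
  · rw [Polynomial.iterate_derivative_eq_zero (by rw [natDegree_Hr]; exact_mod_cast hlt)]
    simp [if_neg hlt.ne]

lemma integral_Hr_mul_Hr' (i j : ℕ) :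
    ∫ x : ℝ, (Hr i).eval x * (Hr j).eval x * G x
      = (if i = j then (i.factorial : ℝ) * √(2 * π) else 0) := by
  rcases le_total j i with h | h
  · rw [integral_Hr_mul_Hr j i h]
    rcases eq_or_ne i j with rfl | hne
    · simp
    · simp [hne, Ne.symm hne]
  · have := integral_Hr_mul_Hr i j h
    rw [← this]
    congr 1; funext x; ring

lemma derivative_comp_lin (p : ℝ[X]) (θ : ℝ) :
    derivative (p.comp (X + C θ)) = (derivative p).comp (X + C θ) := by
  rw [derivative_comp]
  simp

lemma iterate_derivative_Hr_comp (θ : ℝ) (j : ℕ) : ∀ m : ℕ,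
    derivative^[j] ((Hr (m + j)).comp (X + C θ))
      = C (((m + j).descFactorial j : ℕ) : ℝ) * (Hr m).comp (X + C θ) := by
  induction j with
  | zero => simp
  | succ j ih =>
      intro m
      rw [Function.iterate_succ_apply, derivative_comp_lin, show m + (j+1) = (m + j) + 1 by ring,
        derivative_Hr, ← C_eq_natCast, mul_comp, C_comp, iterate_derivative_C_mul, ih m]
      rw [← mul_assoc, ← C_mul]
      congr 2
      rw [show (m + j) + 1 = (m + j + 1) by ring, Nat.succ_descFactorial_succ]
      push_cast
      ring

-- mean-type integrals: E[He_m(x+θ)] over unnormalized gaussian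
lemma integral_Hr_comp (θ : ℝ) : ∀ m : ℕ,
    ∫ x : ℝ, ((Hr m).comp (X + C θ)).eval x * G x = θ ^ m * √(2 * π) := by
  intro m
  induction m with
  | zero => simpa [Hr_zero] using integral_G
  | succ m ih =>
      have key := integral_ibp ((Hr m).comp (X + C θ)) 1
      simp only [derivative_one, eval_zero, mul_zero, zero_mul, integral_zero, eval_one, mul_one]
        at key
      have expand : ∀ x : ℝ, ((Hr (m+1)).comp (X + C θ)).eval x * G x
          = (X * ((Hr m).comp (X + C θ)) - derivative ((Hr m).comp (X + C θ))).eval x * G x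
            + θ * (((Hr m).comp (X + C θ)).eval x * G x) := by
        intro x
        rw [Hr_succ, sub_comp, mul_comp, X_comp, derivative_comp_lin]
        simp only [eval_sub, eval_mul, eval_add, eval_X, eval_C, derivative_comp_lin]
        ring
      have hi1 : Integrable (fun x : ℝ =>
          (X * ((Hr m).comp (X + C θ)) - derivative ((Hr m).comp (X + C θ))).eval x * G x) :=
        integrable_poly_G _
      have hi2 : Integrable (fun x : ℝ => θ * (((Hr m).comp (X + C θ)).eval x * G x)) :=
        (integrable_poly_G _).const_mul θ
      rw [integral_congr_ae (Filter.Eventually.of_forall expand), integral_add hi1 hi2,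
        integral_const_mul, key, ih]
      ring

lemma coeff_Hr_of_lt {n m : ℕ} (h : n < m) : (Hr n).coeff m = 0 := by
  simp [Hr, coeff_map, coeff_hermite_of_lt h]

lemma hermite_expansion : ∀ (N : ℕ) (p : ℝ[X]), p.degree < (N : ℕ) →
    ∃ a : ℕ → ℝ, p = ∑ j ∈ Finset.range N, C (a j) * Hr j := by
  intro N
  induction N with
  | zero =>
      intro p hp
      refine ⟨fun _ => 0, ?_⟩
      simp only [Finset.range_zero, Finset.sum_empty]
      ext m
      simpa using (degree_lt_iff_coeff_zero p 0).1 (by exact_mod_cast hp) m (Nat.zero_le m)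
  | succ N ih =>
      intro p hp
      set r := p - C (p.coeff N) * Hr N with hr
      have hrdeg : r.degree < (N : ℕ) := by
        rw [degree_lt_iff_coeff_zero]
        intro m hm
        rcases eq_or_lt_of_le hm with rfl | hlt
        · simp [hr, coeff_Hr_self]
        · have h1 : p.coeff m = 0 :=
            (degree_lt_iff_coeff_zero p (N+1)).1 (by exact_mod_cast hp) m hlt
          have h2 : (Hr N).coeff m = 0 := coeff_Hr_of_lt hlt
          simp [hr, h1, h2]
      obtain ⟨a, ha⟩ := ih r hrdeg
      refine ⟨Function.update a N (p.coeff N), ?_⟩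
      rw [Finset.sum_range_succ, Function.update_self]
      have : ∑ j ∈ Finset.range N, C (Function.update a N (p.coeff N) j) * Hr j
          = ∑ j ∈ Finset.range N, C (a j) * Hr j := by
        refine Finset.sum_congr rfl fun j hj => ?_
        rw [Function.update_of_ne (Finset.mem_range.1 hj).ne]
      rw [this, ← ha, hr]
      ring

lemma integral_expansion_mul_Hr (N : ℕ) (a : ℕ → ℝ) (m : ℕ) (hm : m < N) :
    ∫ x : ℝ, (Hr m).eval x * (∑ j ∈ Finset.range N, C (a j) * Hr j).eval x * G x
      = a m * ((m.factorial : ℝ) * √(2 * π)) := by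
  have hpt : ∀ x : ℝ, (Hr m).eval x * (∑ j ∈ Finset.range N, C (a j) * Hr j).eval x * G x
      = ∑ j ∈ Finset.range N, a j * ((Hr m).eval x * (Hr j).eval x * G x) := by
    intro x
    rw [eval_finset_sum, Finset.mul_sum, Finset.sum_mul]
    refine Finset.sum_congr rfl fun j _ => ?_
    simp only [eval_mul, eval_C]
    ring
  rw [integral_congr_ae (Filter.Eventually.of_forall hpt),
    integral_finset_sum _ fun j _ => by
      simpa [mul_assoc] using (integrable_poly_G (Hr m * Hr j)).const_mul (a j)]
  have : ∀ j ∈ Finset.range N, a j * ∫ x : ℝ, (Hr m).eval x * (Hr j).eval x * G x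
      = if m = j then a j * ((m.factorial : ℝ) * √(2 * π)) else 0 := by
    intro j _
    rw [integral_Hr_mul_Hr' m j]
    split <;> simp_all
  calc ∑ j ∈ Finset.range N, ∫ x : ℝ, a j * ((Hr m).eval x * (Hr j).eval x * G x)
      = ∑ j ∈ Finset.range N, (if m = j then a j * ((m.factorial : ℝ) * √(2 * π)) else 0) := by
        refine Finset.sum_congr rfl fun j hj => ?_
        rw [integral_const_mul]
        exact this j hj
    _ = a m * ((m.factorial : ℝ) * √(2 * π)) := by
        rw [Finset.sum_ite_eq (Finset.range N) m]
        simp [Finset.mem_range.2 hm]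

lemma integral_sq_expansion (N : ℕ) (a : ℕ → ℝ) :
    ∫ x : ℝ, ((∑ j ∈ Finset.range N, C (a j) * Hr j).eval x) ^ 2 * G x
      = (∑ j ∈ Finset.range N, (a j) ^ 2 * (j.factorial : ℝ)) * √(2 * π) := by
  have hpt : ∀ x : ℝ, ((∑ j ∈ Finset.range N, C (a j) * Hr j).eval x) ^ 2 * G x
      = ∑ i ∈ Finset.range N, ∑ j ∈ Finset.range N,
          (a i * a j) * ((Hr i).eval x * (Hr j).eval x * G x) := by
    intro x
    rw [eval_finset_sum, sq, Finset.sum_mul_sum, Finset.sum_mul]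
    refine Finset.sum_congr rfl fun i _ => ?_
    rw [Finset.sum_mul]
    refine Finset.sum_congr rfl fun j _ => ?_
    simp only [eval_mul, eval_C]
    ring
  rw [integral_congr_ae (Filter.Eventually.of_forall hpt)]
  rw [integral_finset_sum _ fun i _ => integrable_finset_sum _ fun j _ => by
    simpa [mul_assoc] using (integrable_poly_G (Hr i * Hr j)).const_mul (a i * a j)]
  have hrow : ∀ i ∈ Finset.range N,
      (∫ x : ℝ, ∑ j ∈ Finset.range N, (a i * a j) * ((Hr i).eval x * (Hr j).eval x * G x))
        = (a i) ^ 2 * (i.factorial : ℝ) * √(2 * π) := by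
    intro i hi
    rw [integral_finset_sum _ fun j _ => by
      simpa [mul_assoc] using (integrable_poly_G (Hr i * Hr j)).const_mul (a i * a j)]
    have : ∀ j ∈ Finset.range N,
        (∫ x : ℝ, (a i * a j) * ((Hr i).eval x * (Hr j).eval x * G x))
          = if i = j then (a i)^2 * (i.factorial : ℝ) * √(2 * π) else 0 := by
      intro j _
      rw [integral_const_mul, integral_Hr_mul_Hr' i j]
      split
      · rename_i h; subst h; ring
      · simp
    rw [Finset.sum_congr rfl this, Finset.sum_ite_eq (Finset.range N) i]
    simp [Finset.mem_range.1 hi]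
  rw [Finset.sum_congr rfl hrow, ← Finset.sum_mul]

/-- The `k`-th probabilists' Hermite polynomial, evaluated at a real number. -/
noncomputable def hermiteP (k : ℕ) (x : ℝ) : ℝ := Polynomial.aeval x (Polynomial.hermite k)

lemma hermiteP_eq (k : ℕ) (x : ℝ) : hermiteP k x = (Hr k).eval x := by
  rw [hermiteP, aeval_def, Hr, eval_map, algebraMap_int_eq]

lemma coeff_Q (θ : ℝ) (k : ℕ) (a : ℕ → ℝ)
    (ha : (Hr k).comp (X + C θ) = ∑ j ∈ Finset.range (k+1), C (a j) * Hr j)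
    (m : ℕ) (hm : m ≤ k) : a m = (k.choose m : ℝ) * θ ^ (k - m) := by
  have h1 : ∫ x : ℝ, (Hr m).eval x * ((Hr k).comp (X + C θ)).eval x * G x
      = a m * ((m.factorial : ℝ) * √(2 * π)) := by
    rw [ha]
    exact integral_expansion_mul_Hr (k+1) a m (Nat.lt_succ_of_le hm)
  have h2 : ∫ x : ℝ, (Hr m).eval x * ((Hr k).comp (X + C θ)).eval x * G x
      = (k.descFactorial m : ℝ) * (θ ^ (k - m) * √(2 * π)) := by
    rw [integral_Hr_mul m]
    have hk : k = (k - m) + m := (Nat.sub_add_cancel hm).symm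
    rw [show ((Hr k).comp (X + C θ)) = ((Hr ((k-m)+m)).comp (X + C θ)) by rw [← hk],
      iterate_derivative_Hr_comp, ← hk]
    simp only [eval_mul, eval_C]
    simp only [mul_assoc]
    rw [integral_const_mul, integral_Hr_comp]
  have hsqrt : √(2 * π) ≠ 0 := by positivity
  have hfac : (m.factorial : ℝ) ≠ 0 := by exact_mod_cast m.factorial_pos.ne'
  have h := h1.symm.trans h2
  have h3 : a m * (m.factorial : ℝ) = (k.descFactorial m : ℝ) * θ ^ (k - m) :=
    mul_right_cancel₀ hsqrt (by linear_combination h)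
  have h4 : (k.descFactorial m : ℝ) = (m.factorial : ℝ) * (k.choose m : ℝ) := by
    exact_mod_cast congrArg (Nat.cast : ℕ → ℝ) (Nat.descFactorial_eq_factorial_mul_choose k m)
  refine mul_right_cancel₀ hfac ?_
  rw [h3, h4]
  ring

lemma integral_sq_gaussianReal (θ : ℝ) (k : ℕ) :
    ∫ x, (hermiteP k x) ^ 2 ∂(ProbabilityTheory.gaussianReal θ 1)
      = ∑ m ∈ Finset.range (k+1), ((k.choose m : ℝ) * θ ^ (k - m)) ^ 2 * m.factorial := by
  -- reduce to Lebesgue integral with density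
  rw [ProbabilityTheory.gaussianReal_of_var_ne_zero θ one_ne_zero]
  have hpdf : ProbabilityTheory.gaussianPDF θ 1
      = fun x => (((ProbabilityTheory.gaussianPDFReal θ 1 x).toNNReal : NNReal) : ENNReal) := rfl
  rw [hpdf, integral_withDensity_eq_integral_smul
    ((ProbabilityTheory.measurable_gaussianPDFReal θ 1).real_toNNReal)]
  have hpt : ∀ x : ℝ, (ProbabilityTheory.gaussianPDFReal θ 1 x).toNNReal • (hermiteP k x) ^ 2
      = (√(2 * π))⁻¹ * (((Hr k).comp (X + C θ)).eval (x - θ) ^ 2 * G (x - θ)) := by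
    intro x
    simp only [NNReal.smul_def, smul_eq_mul]
    rw [Real.coe_toNNReal _ (ProbabilityTheory.gaussianPDFReal_nonneg θ 1 x)]
    rw [ProbabilityTheory.gaussianPDFReal_def]
    rw [eval_comp]
    simp only [eval_add, eval_X, eval_C, sub_add_cancel]
    rw [hermiteP_eq]
    unfold G
    push_cast
    ring_nf
  rw [integral_congr_ae (Filter.Eventually.of_forall hpt), integral_const_mul]
  have hshift : ∫ x : ℝ, ((Hr k).comp (X + C θ)).eval (x - θ) ^ 2 * G (x - θ)
      = ∫ x : ℝ, ((Hr k).comp (X + C θ)).eval x ^ 2 * G x := by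
    exact integral_sub_right_eq_self (fun x => ((Hr k).comp (X + C θ)).eval x ^ 2 * G x) θ
  rw [hshift]
  -- expand in Hermite basis
  have hdeg : ((Hr k).comp (X + C θ)).degree < ((k+1 : ℕ) : WithBot ℕ) := by
    refine lt_of_le_of_lt (degree_le_natDegree) ?_
    rw [natDegree_comp, natDegree_Hr, natDegree_X_add_C, mul_one]
    exact_mod_cast Nat.lt_succ_self k
  obtain ⟨a, ha⟩ := hermite_expansion (k+1) _ hdeg
  have hcoef : ∀ m ∈ Finset.range (k+1), (a m)^2 * (m.factorial : ℝ)
      = ((k.choose m : ℝ) * θ ^ (k - m)) ^ 2 * m.factorial := by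
    intro m hm
    rw [coeff_Q θ k a ha m (Nat.lt_succ_iff.1 (Finset.mem_range.1 hm))]
  rw [ha, integral_sq_expansion (k+1) a, Finset.sum_congr rfl hcoef]
  rw [mul_comm, mul_assoc, mul_inv_cancel₀ (by positivity : √(2 * π) ≠ 0), mul_one]

theorem stmt8 (θ : ℝ) (k : ℕ) (hk : 1 ≤ k) :
    ∫ x, (hermiteP k x) ^ 2 ∂(gaussianReal θ 1) ≤ (k : ℝ) ^ k * (1 + θ ^ 2 / k) ^ k := by
  rw [integral_sq_gaussianReal θ k]
  have hk0 : (k : ℝ) ≠ 0 := by positivity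
  have hrhs : (k : ℝ) ^ k * (1 + θ ^ 2 / k) ^ k = ((k : ℝ) + θ ^ 2) ^ k := by
    rw [← mul_pow]
    congr 1
    field_simp
  rw [hrhs, add_pow]
  refine Finset.sum_le_sum fun m hm => ?_
  have hdesc : ((k.descFactorial m : ℕ) : ℝ) ≤ (k : ℝ) ^ m := by
    exact_mod_cast Nat.descFactorial_le_pow k m
  have hsq : ((k.choose m : ℝ) * θ ^ (k - m)) ^ 2 * (m.factorial : ℝ)
      = (k.choose m : ℝ) * ((k.descFactorial m : ℕ) : ℝ) * (θ ^ 2) ^ (k - m) := by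
    rw [Nat.descFactorial_eq_factorial_mul_choose]
    push_cast
    rw [← pow_mul, show 2 * (k - m) = (k - m) * 2 by ring, pow_mul]
    ring
  rw [hsq]
  have hθ : (0:ℝ) ≤ (θ ^ 2) ^ (k - m) := by positivity
  have hc : (0:ℝ) ≤ (k.choose m : ℝ) := by positivity
  calc (k.choose m : ℝ) * ((k.descFactorial m : ℕ) : ℝ) * (θ ^ 2) ^ (k - m)
      ≤ (k.choose m : ℝ) * (k : ℝ) ^ m * (θ ^ 2) ^ (k - m) := by
        apply mul_le_mul_of_nonneg_right _ hθ
        exact mul_le_mul_of_nonneg_left hdesc hc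
    _ = (k : ℝ) ^ m * (θ ^ 2) ^ (k - m) * (k.choose m : ℝ) := by ring
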